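/- Let R be a commutative ring with exactly two associated primes p₁ and p₂ satisfying p₁ ∩ p₂ = {0}. Then the zero-divisor graph Γ(R) is a complete bipartite graph with parts p₁ \ {0} and p₂ \ {0}: every element of p₁ \ {0} multiplies to 0 with every element of p₂ \ {0}, and no two distinct elements within the same part multiply to 0. -/

import Mathlib

private lemma assPrime_ne_bot {R : Type*} [CommRing R] {p q : Ideal R}
    (hp : IsAssociatedPrime p R) (hq : IsAssociatedPrime q R) (hne : p ≠ q) : q ≠ ⊥ := by
  intro hbot
  subst hbot
  obtain ⟨hpP, x, hx⟩ := hp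
  obtain ⟨a, ha, ha0⟩ := Submodule.ne_bot_iff p |>.mp hne
  have hax : a * x = 0 := by
    have := hx ▸ ha
    obtain ⟨n, hn⟩ := this
    rw [Submodule.mem_colon_singleton, smul_eq_mul] at hn
    rcases hq.isPrime.mem_or_mem hn with h | h
    · rw [Ideal.mem_bot.mp (hq.isPrime.mem_of_pow_mem n h), zero_mul]
    · rw [Ideal.mem_bot.mp h, mul_zero]
  have : a ∈ (⊥ : Ideal R) ∨ x ∈ (⊥ : Ideal R) :=
    hq.isPrime.mem_or_mem (by simpa [Ideal.mem_bot] using hax)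
  rcases this with h | h
  · exact ha0 (by simpa using h)
  · have hx0 : x = 0 := by simpa using h
    rw [hx0] at hx
    exact hpP.ne_top (hx ▸ Ideal.radical_eq_top.mpr (by ext y; simp [Submodule.mem_colon_singleton]))

theorem zeroDivisorGraph_completeBipartite_of_ass (R : Type*) [CommRing R] (p₁ p₂ : Ideal R)
    (hAss : associatedPrimes R R = {p₁, p₂}) (hne : p₁ ≠ p₂) (hint : p₁ ⊓ p₂ = ⊥) :
    (∀ a ∈ p₁, a ≠ 0 → ∀ b ∈ p₂, b ≠ 0 → a * b = 0) ∧
    (∀ a ∈ p₁, ∀ b ∈ p₁, a ≠ 0 → b ≠ 0 → a ≠ b → a * b ≠ 0) ∧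
    (∀ a ∈ p₂, ∀ b ∈ p₂, a ≠ 0 → b ≠ 0 → a ≠ b → a * b ≠ 0) ∧
    {x : R | x ≠ 0 ∧ ∃ b : R, b ≠ 0 ∧ x * b = 0} = ((↑p₁ ∪ ↑p₂ : Set R) \ {0}) := by
  have h1 : IsAssociatedPrime p₁ R := by
    have : p₁ ∈ associatedPrimes R R := by rw [hAss]; left; rfl
    exact this
  have h2 : IsAssociatedPrime p₂ R := by
    have : p₂ ∈ associatedPrimes R R := by rw [hAss]; right; rfl
    exact this
  have hp1 : p₁.IsPrime := h1.isPrime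
  have hp2 : p₂.IsPrime := h2.isPrime
  -- product of elements of p₁ and p₂ is zero
  have hmul : ∀ a ∈ p₁, ∀ b ∈ p₂, a * b = 0 := by
    intro a ha b hb
    have : a * b ∈ p₁ ⊓ p₂ := ⟨p₁.mul_mem_right b ha, p₂.mul_mem_left a hb⟩
    rw [hint] at this
    simpa using this
  -- being in both ideals means zero
  have hboth : ∀ x : R, x ∈ p₁ → x ∈ p₂ → x = 0 := by
    intro x hx1 hx2
    have : x ∈ p₁ ⊓ p₂ := ⟨hx1, hx2⟩
    rw [hint] at this
    simpa using this
  refine ⟨fun a ha _ b hb _ => hmul a ha b hb, ?_, ?_, ?_⟩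
  · intro a ha b hb ha0 hb0 _ hab
    rcases hp2.mem_or_mem (show a * b ∈ p₂ by rw [hab]; exact p₂.zero_mem) with h | h
    · exact ha0 (hboth a ha h)
    · exact hb0 (hboth b hb h)
  · intro a ha b hb ha0 hb0 _ hab
    rcases hp1.mem_or_mem (show a * b ∈ p₁ by rw [hab]; exact p₁.zero_mem) with h | h
    · exact ha0 (hboth a h ha)
    · exact hb0 (hboth b h hb)
  · ext x
    simp only [Set.mem_setOf_eq, Set.mem_diff, Set.mem_union, SetLike.mem_coe,
      Set.mem_singleton_iff]
    constructor
    · rintro ⟨hx0, b, hb0, hxb⟩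
      refine ⟨?_, hx0⟩
      have m1 := hp1.mem_or_mem (show x * b ∈ p₁ by rw [hxb]; exact p₁.zero_mem)
      have m2 := hp2.mem_or_mem (show x * b ∈ p₂ by rw [hxb]; exact p₂.zero_mem)
      rcases m1 with h | h
      · exact Or.inl h
      · rcases m2 with h' | h'
        · exact Or.inr h'
        · exact absurd (hboth b h h') hb0
    · rintro ⟨hx, hx0⟩
      refine ⟨hx0, ?_⟩
      rcases hx with h | h
      · obtain ⟨b, hb, hb0⟩ := Submodule.ne_bot_iff p₂ |>.mp (assPrime_ne_bot h1 h2 hne)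
        exact ⟨b, hb0, hmul x h b hb⟩
      · obtain ⟨b, hb, hb0⟩ := Submodule.ne_bot_iff p₁ |>.mp (assPrime_ne_bot h2 h1 hne.symm)
        exact ⟨b, hb0, by rw [mul_comm]; exact hmul b hb x h⟩
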